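/- Let f : ℝⁿ → ℝ and h : ℝⁿ → ℝᵐ be twice continuously differentiable, with f bounded from below and h bounded. Then for every (λ, r) ∈ ℝᵐ × (0, ∞), every s > 0 and every ε̃ > 0, there exists a pair (x(s), t(s)) ∈ ℝⁿ × (0, ∞) such that ‖∇L̂ˢ_{λ,r}(x(s), t(s))‖ ≤ ε̃. -/

import Mathlib

open InnerProductSpace Filter

section helpers

variable {E : Type*} [NormedAddCommGroup E] [InnerProductSpace ℝ E] [CompleteSpace E]

lemma myGrad_of_fderiv {ψ : E → ℝ} {L : E →L[ℝ] ℝ} {y x : E}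
    (hL : HasFDerivAt ψ L x) (he : ∀ v, L v = ⟪y, v⟫_ℝ) : HasGradientAt ψ y x := by
  rw [hasGradientAt_iff_hasFDerivAt]
  refine hL.congr_fderiv ?_
  ext v
  rw [toDual_apply_apply, he v]

lemma myGrad_add {φ ψ : E → ℝ} {a b x : E} (hφ : HasGradientAt φ a x)
    (hψ : HasGradientAt ψ b x) : HasGradientAt (fun y => φ y + ψ y) (a + b) x := by
  refine myGrad_of_fderiv (HasFDerivAt.add hφ hψ) fun v => ?_
  simp [toDual_apply_apply, inner_add_left]

lemma myGrad_const_mul {ψ : E → ℝ} {a x : E} (c : ℝ) (hψ : HasGradientAt ψ a x) :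
    HasGradientAt (fun y => c * ψ y) (c • a) x := by
  refine myGrad_of_fderiv (HasFDerivAt.const_mul hψ c) fun v => ?_
  simp [toDual_apply_apply, real_inner_smul_left]

lemma myGrad_sum {ι : Type*} (u : Finset ι) {Φ : ι → E → ℝ} {A : ι → E} {x : E}
    (hΦ : ∀ i ∈ u, HasGradientAt (Φ i) (A i) x) :
    HasGradientAt (fun y => ∑ i ∈ u, Φ i y) (∑ i ∈ u, A i) x := by
  refine myGrad_of_fderiv (HasFDerivAt.fun_sum (fun i hi => (hΦ i hi : HasFDerivAt _ _ _))) fun v => ?_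
  simp [toDual_apply_apply, sum_inner]

lemma myGrad_comp {ψ : E → ℝ} {g : ℝ → ℝ} {g' : ℝ} {a x : E}
    (hg : HasDerivAt g g' (ψ x)) (hψ : HasGradientAt ψ a x) :
    HasGradientAt (fun y => g (ψ y)) (g' • a) x := by
  refine myGrad_of_fderiv (hg.comp_hasFDerivAt x hψ) fun v => ?_
  simp [toDual_apply_apply, real_inner_smul_left, mul_comm]

lemma myGrad_normsq (x : E) : HasGradientAt (fun y : E => ‖y‖ ^ 2) ((2 : ℝ) • x) x := by
  have h : HasFDerivAt (fun y : E => ⟪y, y⟫_ℝ)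
      ((fderivInnerCLM ℝ (x, x)).comp ((ContinuousLinearMap.id ℝ E).prod
        (ContinuousLinearMap.id ℝ E))) x :=
    (hasFDerivAt_id x).inner ℝ (hasFDerivAt_id x)
  have h2 : HasFDerivAt (fun y : E => ‖y‖ ^ 2)
      ((fderivInnerCLM ℝ (x, x)).comp ((ContinuousLinearMap.id ℝ E).prod
        (ContinuousLinearMap.id ℝ E))) x := by
    convert h using 2 with y
    exact (real_inner_self_eq_norm_sq y).symm
  refine myGrad_of_fderiv h2 fun v => ?_
  simp only [fderivInnerCLM_apply, ContinuousLinearMap.comp_apply, ContinuousLinearMap.prod_apply,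
    ContinuousLinearMap.id_apply, toDual_apply_apply, real_inner_smul_left]
  rw [real_inner_comm v x]
  ring

/-- Quadratic-penalty Ekeland: a bounded-below function with everywhere-defined gradient
on a proper real inner product space has approximate critical points. -/
lemma approx_crit [ProperSpace E] {ψ : E → ℝ} {G : E → E} (hG : ∀ x, HasGradientAt ψ (G x) x)
    {κ : ℝ} (hb : ∀ x, κ ≤ ψ x) {ε : ℝ} (hε : 0 < ε) : ∃ x, ‖G x‖ ≤ ε := by
  set M : ℝ := ψ 0 - κ with hM
  have hM0 : 0 ≤ M := by have := hb 0; simp [hM]; linarith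
  set δ : ℝ := ε ^ 2 / (4 * (M + 1)) with hδ
  have hδ0 : 0 < δ := by positivity
  set g : E → ℝ := fun x => ψ x + δ * ‖x‖ ^ 2 with hg
  have hGg : ∀ x, HasGradientAt g (G x + (2 * δ) • x) x := by
    intro x
    have := myGrad_add (hG x) (myGrad_const_mul δ (myGrad_normsq x))
    convert this using 1
    rw [smul_smul]
    ring_nf
  have hcont : Continuous g := by
    rw [continuous_iff_continuousAt]
    intro x
    exact (hGg x).continuousAt
  have hlim : Tendsto g (cocompact E) atTop := by
    have h1 : Tendsto (fun x : E => κ + δ * ‖x‖ ^ 2) (cocompact E) atTop := by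
      apply tendsto_atTop_add_const_left
      exact (tendsto_pow_atTop two_ne_zero).comp tendsto_norm_cocompact_atTop
        |>.const_mul_atTop hδ0
    exact tendsto_atTop_mono (fun x => by have := hb x; simp only [hg]; nlinarith) h1
  obtain ⟨z, hz⟩ := hcont.exists_forall_le hlim
  have hmin : IsLocalMin g z := Filter.Eventually.of_forall hz
  have hfd0 : fderiv ℝ g z = 0 := hmin.fderiv_eq_zero
  have hgrad : G z + (2 * δ) • z = 0 := by
    have h1 : _root_.gradient g z = G z + (2 * δ) • z := (hGg z).gradient
    rw [_root_.gradient, hfd0] at h1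
    simp at h1
    exact h1.symm
  have hGz : G z = -((2 * δ) • z) := by linear_combination (norm := abel) hgrad
  have hbound : δ * ‖z‖ ^ 2 ≤ M := by
    have h1 : g z ≤ g 0 := hz 0
    have h2 := hb z
    simp only [hg, norm_zero] at h1
    simp [hM]
    nlinarith
  have hnorm : ‖G z‖ ^ 2 ≤ ε ^ 2 := by
    rw [hGz, norm_neg, norm_smul, Real.norm_eq_abs, abs_of_pos (by positivity), mul_pow]
    have h4 : 4 * δ * M ≤ ε ^ 2 := by
      have heq : 4 * δ * (M + 1) = ε ^ 2 := by
        rw [hδ]; field_simp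
      nlinarith [hδ0]
    nlinarith [hδ0, hbound]
  refine ⟨z, ?_⟩
  nlinarith [norm_nonneg (G z)]

end helpers

lemma normsq_eq {m : ℕ} (v : EuclideanSpace ℝ (Fin m)) : ‖v‖ ^ 2 = ∑ i, (v i) ^ 2 := by
  rw [EuclideanSpace.norm_eq, Real.sq_sqrt (by positivity)]
  simp [sq_abs]

/-- if `f`, `h` are twice continuously differentiable, `f` is bounded below
and `h` is bounded, then for every `(λ, r)` with `r > 0`, every barrier parameter `s > 0`
and every `ε̃ > 0`, the barrier-augmented smoothing function
`L̂ˢ_{λ,r}(x,t) = f x + ⟨λ, h x⟩ + (r/(2t))‖h x‖² + (r/2)t + (r/(2t))s²` has an inexact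
stationary point: there exists `(x(s), t(s))` with `t(s) > 0` and
`‖∇L̂ˢ_{λ,r}(x(s), t(s))‖ ≤ ε̃`, where
`∇L̂ˢ_{λ,r}(x,t) = (∇f(x) + ∇h(x)(λ + (r/t) h(x)), (r/2)(1 − (‖h x‖² + s²)/t²))`. -/
theorem stmt13 {n m : ℕ} (f : EuclideanSpace ℝ (Fin n) → ℝ)
    (h : EuclideanSpace ℝ (Fin n) → EuclideanSpace ℝ (Fin m))
    (hf : ContDiff ℝ 2 f) (hh : ContDiff ℝ 2 h)
    (hfb : ∃ κf, ∀ x, κf ≤ f x) (hhb : ∃ κh, ∀ x, ‖h x‖ ≤ κh)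
    (lam : EuclideanSpace ℝ (Fin m)) (r s ε : ℝ) (hr : 0 < r) (hs : 0 < s) (hε : 0 < ε) :
    ∃ (x : EuclideanSpace ℝ (Fin n)) (t : ℝ), 0 < t ∧
      Real.sqrt
        (‖gradient f x + ∑ i, (lam i + (r / t) * h x i) • gradient (fun y => h y i) x‖ ^ 2 +
          ((r / 2) * (1 - (‖h x‖ ^ 2 + s ^ 2) / t ^ 2)) ^ 2) ≤ ε := by
  obtain ⟨κf, hκf⟩ := hfb
  obtain ⟨κh, hκh⟩ := hhb
  have hfd : Differentiable ℝ f := hf.differentiable (by norm_num)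
  have hhd : Differentiable ℝ h := hh.differentiable (by norm_num)
  have hid : ∀ (i : Fin m) (y : EuclideanSpace ℝ (Fin n)),
      DifferentiableAt ℝ (fun w => h w i) y := by
    intro i y
    have := ((EuclideanSpace.proj (𝕜 := ℝ) i).differentiableAt).comp y (hhd y)
    exact this
  set tt : EuclideanSpace ℝ (Fin n) → ℝ := fun y => Real.sqrt (‖h y‖ ^ 2 + s ^ 2) with htt
  have httpos : ∀ y, 0 < tt y := fun y => Real.sqrt_pos.mpr (by positivity)
  set G : EuclideanSpace ℝ (Fin n) → EuclideanSpace ℝ (Fin n) := fun y =>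
    gradient f y + ∑ i, (lam i + (r / tt y) * h y i) • gradient (fun w => h w i) y with hG
  set ψ : EuclideanSpace ℝ (Fin n) → ℝ :=
    fun y => f y + ((∑ i, lam i * h y i) + r * Real.sqrt (‖h y‖ ^ 2 + s ^ 2)) with hψ
  have key : ∀ y, HasGradientAt ψ (G y) y := by
    intro y
    have hGf : HasGradientAt f (gradient f y) y := (hfd y).hasGradientAt
    have HGi : ∀ i : Fin m, HasGradientAt (fun w => h w i)
        (gradient (fun w => h w i) y) y := fun i => (hid i y).hasGradientAt
    set Gi : Fin m → EuclideanSpace ℝ (Fin n) := fun i => gradient (fun w => h w i) y with hGi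
    have hsum : HasGradientAt (fun w => ∑ i, lam i * h w i) (∑ i, lam i • Gi i) y :=
      myGrad_sum Finset.univ fun i _ => myGrad_const_mul (lam i) (HGi i)
    have husq : HasGradientAt (fun w => (∑ i, (h w i) ^ 2) + s ^ 2)
        ((∑ i, (2 * h y i) • Gi i) + 0) y := by
      refine myGrad_add (myGrad_sum Finset.univ fun i _ => ?_) (hasGradientAt_const y _)
      have := myGrad_comp (g := fun w => w ^ 2) (ψ := fun w => h w i)
        (hasDerivAt_pow 2 (h y i)) (HGi i)
      convert this using 2
      push_cast
      ring
    have hueq : (fun w : EuclideanSpace ℝ (Fin n) => ‖h w‖ ^ 2 + s ^ 2)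
        = fun w => (∑ i, (h w i) ^ 2) + s ^ 2 :=
      funext fun w => by rw [normsq_eq]
    have hu : HasGradientAt (fun w => ‖h w‖ ^ 2 + s ^ 2)
        (∑ i, (2 * h y i) • Gi i) y := by
      rw [hueq]; simpa using husq
    have huy : ‖h y‖ ^ 2 + s ^ 2 ≠ 0 := by positivity
    have hsqrt : HasGradientAt (fun w => Real.sqrt (‖h w‖ ^ 2 + s ^ 2))
        ((1 / (2 * tt y)) • ∑ i, (2 * h y i) • Gi i) y := by
      have := myGrad_comp (g := Real.sqrt) (ψ := fun w => ‖h w‖ ^ 2 + s ^ 2)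
        (Real.hasDerivAt_sqrt huy) hu
      simpa [htt] using this
    have hrs : HasGradientAt (fun w => r * Real.sqrt (‖h w‖ ^ 2 + s ^ 2))
        (r • ((1 / (2 * tt y)) • ∑ i, (2 * h y i) • Gi i)) y := myGrad_const_mul r hsqrt
    have htot := myGrad_add hGf (myGrad_add hsum hrs)
    convert htot using 1
    simp only [hG]
    congr 1
    rw [smul_smul, Finset.smul_sum, ← Finset.sum_add_distrib]
    refine Finset.sum_congr rfl fun i _ => ?_
    show (lam i + r / tt y * h y i) • Gi i = _
    have h0 : tt y ≠ 0 := (httpos y).ne'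
    have hc : r * (1 / (2 * tt y)) * (2 * h y i) = r / tt y * h y i := by
      field_simp
    rw [smul_smul, hc, add_smul]
  -- ψ is bounded below
  have hbd : ∀ y, κf - ‖lam‖ * κh ≤ ψ y := by
    intro y
    have hinner : ⟪lam, h y⟫_ℝ = ∑ i, lam i * h y i := by
      simp [PiLp.inner_apply, RCLike.inner_apply, conj_trivial]
      exact Finset.sum_congr rfl fun i _ => mul_comm _ _
    have habs : |⟪lam, h y⟫_ℝ| ≤ ‖lam‖ * ‖h y‖ := abs_real_inner_le_norm lam (h y)
    have h1 : ‖lam‖ * ‖h y‖ ≤ ‖lam‖ * κh :=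
      mul_le_mul_of_nonneg_left (hκh y) (norm_nonneg lam)
    have h2 : -(‖lam‖ * κh) ≤ ∑ i, lam i * h y i := by
      rw [← hinner]
      have := neg_abs_le (⟪lam, h y⟫_ℝ)
      linarith
    have h3 : 0 ≤ r * Real.sqrt (‖h y‖ ^ 2 + s ^ 2) := by positivity
    have h4 := hκf y
    simp only [hψ]
    linarith
  obtain ⟨z, hz⟩ := approx_crit key hbd hε
  refine ⟨z, tt z, httpos z, ?_⟩
  have ht2 : tt z ^ 2 = ‖h z‖ ^ 2 + s ^ 2 := Real.sq_sqrt (by positivity)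
  have hzero : (r / 2) * (1 - (‖h z‖ ^ 2 + s ^ 2) / tt z ^ 2) = 0 := by
    rw [ht2, div_self (by positivity)]
    ring
  show Real.sqrt (‖G z‖ ^ 2 +
      ((r / 2) * (1 - (‖h z‖ ^ 2 + s ^ 2) / tt z ^ 2)) ^ 2) ≤ ε
  rw [hzero]
  simpa using hz
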